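/- arXiv:math/0107140 — 3 statements merged into one kernel-verified Lean document; each statement's English description precedes it below -/
import Mathlib

section
/- Let G = (V,E) be a finite connected graph, ρ ∈ V, and D ⊂ V∖{ρ}. Let G_- be the subgraph of G induced on V∖D, let Γ* be the set of spanning trees t of G such that for every w ∈ V∖D the path in t from w to ρ avoids D, and assume Γ* is nonempty. If T is a uniformly random spanning tree of G, then conditioned on T ∈ Γ*, the edge set T ∩ E(G_-) is distributed as a uniformly random spanning tree of G_-. -/
open Finset
open scoped Classical

set_option maxHeartbeats 1000000

/-- `t` (a finite set of edges) is a spanning tree of the graph `G`. -/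
def SpTree {W : Type*} (G : SimpleGraph W) (t : Finset (Sym2 W)) : Prop :=
  ↑t ⊆ G.edgeSet ∧ (∀ e ∈ t, ¬ e.IsDiag) ∧
    (SimpleGraph.fromEdgeSet (↑t : Set (Sym2 W))).IsTree

/-- The event `Γ*`: for every vertex `w ∉ D`, the path in the tree `t` from `w`
to `ρ` avoids `D` (expressed as the existence of a walk avoiding `D`). -/
def AvoidsD {V : Type*} (t : Finset (Sym2 V)) (ρ : V) (D : Finset V) : Prop :=
  ∀ w : V, w ∉ D → ∃ p : (SimpleGraph.fromEdgeSet (↑t : Set (Sym2 V))).Walk w ρ,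
    ∀ v ∈ p.support, v ∉ D

/-- The restriction of an edge set to the edges with both endpoints outside `D`. -/
noncomputable def restrictE {V : Type*} (t : Finset (Sym2 V)) (D : Finset V) :
    Finset (Sym2 V) :=
  t.filter fun e => ∀ v ∈ e, v ∉ D


open SimpleGraph in
private lemma preconnected_sdiff_aux {W : Type*} {H : SimpleGraph W} {v w : W}
    (h : (H \ fromEdgeSet {s(v, w)}).Reachable v w) (hp : H.Preconnected) :
    (H \ fromEdgeSet {s(v, w)}).Preconnected := by
  have key : ∀ a b : W, H.Adj a b → (H \ fromEdgeSet {s(v, w)}).Reachable a b := by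
    intro a b hab
    by_cases he : s(a, b) = s(v, w)
    · rcases Sym2.eq_iff.mp he with ⟨rfl, rfl⟩ | ⟨rfl, rfl⟩
      · exact h
      · exact h.symm
    · refine Adj.reachable ?_
      rw [sdiff_adj, fromEdgeSet_adj]
      exact ⟨hab, fun hh => he hh.1⟩
  intro a b
  obtain ⟨p⟩ := hp a b
  induction p with
  | nil => exact Reachable.refl _
  | cons hadj p ih => exact (key _ _ hadj).trans ih

open SimpleGraph in
private lemma connected_ncard_le {W : Type*} [Fintype W] :
    ∀ (k : ℕ) (H : SimpleGraph W), H.Connected → H.edgeSet.ncard = k →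
      Fintype.card W ≤ k + 1 := by
  intro k
  induction k using Nat.strong_induction_on with
  | _ k ih =>
    intro H hc hk
    by_cases hac : H.IsAcyclic
    · have ht : H.IsTree := ⟨hc, hac⟩
      haveI : Fintype H.edgeSet := (Set.toFinite _).fintype
      have h1 := ht.card_edgeFinset
      have h2 : H.edgeFinset.card = H.edgeSet.ncard := (Set.ncard_eq_toFinset_card' _).symm
      omega
    · rw [isAcyclic_iff_forall_adj_isBridge] at hac
      push_neg at hac
      obtain ⟨v, w, hadj, hbr⟩ := hac
      rw [isBridge_iff] at hbr
      have hreach : (H \ fromEdgeSet {s(v, w)}).Reachable v w := by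
        by_contra hre; exact hbr hre
      have hconn' : (H \ fromEdgeSet {s(v, w)}).Connected :=
        by haveI := hc.nonempty; exact SimpleGraph.Connected.mk (preconnected_sdiff_aux hreach hc.preconnected)
      have hE : (H \ fromEdgeSet {s(v, w)}).edgeSet = H.edgeSet \ {s(v, w)} := by
        rw [edgeSet_sdiff, edgeSet_fromEdgeSet]
        ext e
        simp only [Set.mem_diff, Set.mem_singleton_iff, Set.mem_setOf_eq]
        constructor
        · rintro ⟨he, h2⟩
          refine ⟨he, fun hh => h2 ⟨hh, ?_⟩⟩
          subst hh
          exact Sym2.mk_isDiag_iff.not.mpr hadj.ne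
        · rintro ⟨he, h2⟩
          exact ⟨he, fun hh => h2 hh.1⟩
      have hmem : s(v, w) ∈ H.edgeSet := hadj
      have hk1 : 1 ≤ k := by
        rw [← hk]
        exact (Set.ncard_pos (Set.toFinite _)).mpr ⟨_, hmem⟩
      have hcard' : (H \ fromEdgeSet {s(v, w)}).edgeSet.ncard = k - 1 := by
        rw [hE, Set.ncard_diff_singleton_of_mem hmem, hk]
      have := ih (k - 1) (by omega) _ hconn' hcard'
      omega

open SimpleGraph in
private lemma isTree_of_connected_of_ncard {W : Type*} [Fintype W] {H : SimpleGraph W}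
    (hc : H.Connected) (hcard : H.edgeSet.ncard + 1 = Fintype.card W) : H.IsTree := by
  refine ⟨hc, ?_⟩
  by_contra hac
  rw [isAcyclic_iff_forall_adj_isBridge] at hac
  push_neg at hac
  obtain ⟨v, w, hadj, hbr⟩ := hac
  rw [isBridge_iff] at hbr
  have hreach : (H \ fromEdgeSet {s(v, w)}).Reachable v w := by
    by_contra hre; exact hbr hre
  have hconn' : (H \ fromEdgeSet {s(v, w)}).Connected :=
    by haveI := hc.nonempty; exact SimpleGraph.Connected.mk (preconnected_sdiff_aux hreach hc.preconnected)
  have hE : (H \ fromEdgeSet {s(v, w)}).edgeSet = H.edgeSet \ {s(v, w)} := by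
    rw [edgeSet_sdiff, edgeSet_fromEdgeSet]
    ext e
    simp only [Set.mem_diff, Set.mem_singleton_iff, Set.mem_setOf_eq]
    constructor
    · rintro ⟨he, h2⟩
      refine ⟨he, fun hh => h2 ⟨hh, ?_⟩⟩
      subst hh
      exact Sym2.mk_isDiag_iff.not.mpr hadj.ne
    · rintro ⟨he, h2⟩
      exact ⟨he, fun hh => h2 hh.1⟩
  have hmem : s(v, w) ∈ H.edgeSet := hadj
  have hk1 : 1 ≤ H.edgeSet.ncard :=
    (Set.ncard_pos (Set.toFinite _)).mpr ⟨_, hmem⟩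
  have hcard' : (H \ fromEdgeSet {s(v, w)}).edgeSet.ncard = H.edgeSet.ncard - 1 := by
    rw [hE, Set.ncard_diff_singleton_of_mem hmem]
  have := connected_ncard_le _ _ hconn' hcard'
  omega



open SimpleGraph in
private lemma sptree_card {W : Type*} [Fintype W] {H : SimpleGraph W} {t : Finset (Sym2 W)}
    (h : SpTree H t) : t.card + 1 = Fintype.card W := by
  obtain ⟨-, hnd, ht⟩ := h
  have he : (fromEdgeSet (↑t : Set (Sym2 W))).edgeSet = ↑t := by
    rw [edgeSet_fromEdgeSet]
    ext e
    simp only [Set.mem_diff, Finset.mem_coe, Set.mem_setOf_eq]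
    exact ⟨fun hh => hh.1, fun hh => ⟨hh, hnd e hh⟩⟩
  haveI : Fintype (fromEdgeSet (↑t : Set (Sym2 W))).edgeSet := (Set.toFinite _).fintype
  have h1 := ht.card_edgeFinset
  have h2 : (fromEdgeSet (↑t : Set (Sym2 W))).edgeFinset.card
      = (fromEdgeSet (↑t : Set (Sym2 W))).edgeSet.ncard := (Set.ncard_eq_toFinset_card' _).symm
  rw [h2, he, Set.ncard_coe_finset] at h1
  exact h1

private lemma mem_restrictE {V : Type*} {t : Finset (Sym2 V)} {D : Finset V} {e : Sym2 V} :
    e ∈ restrictE t D ↔ e ∈ t ∧ ∀ v ∈ e, v ∉ D := Finset.mem_filter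

/-- The edges of `t` touching `D`. -/
noncomputable def touchE {V : Type*} (t : Finset (Sym2 V)) (D : Finset V) : Finset (Sym2 V) :=
  t.filter fun e => ¬ ∀ v ∈ e, v ∉ D

private lemma mem_touchE {V : Type*} {t : Finset (Sym2 V)} {D : Finset V} {e : Sym2 V} :
    e ∈ touchE t D ↔ e ∈ t ∧ ¬ ∀ v ∈ e, v ∉ D := Finset.mem_filter

private lemma image_avoid {V : Type*} [DecidableEq V] {D : Finset V} (t₂ : Finset (Sym2 {v : V // v ∉ D}))
    {e : Sym2 V} (he : e ∈ t₂.image (Sym2.map Subtype.val)) : ∀ v ∈ e, v ∉ D := by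
  simp only [Finset.mem_image] at he
  obtain ⟨e', -, rfl⟩ := he
  intro v hv
  rw [Sym2.mem_map] at hv
  obtain ⟨x, -, rfl⟩ := hv
  exact x.2

/-- The graph homomorphism sending a lifted edge set down to a bigger edge set on `V`. -/
private def downHom {V : Type*} {D : Finset V} (s : Finset (Sym2 {v : V // v ∉ D}))
    (u : Finset (Sym2 V)) (hsu : ∀ e ∈ s, Sym2.map Subtype.val e ∈ u) :
    SimpleGraph.fromEdgeSet (↑s : Set (Sym2 {v : V // v ∉ D})) →g
      SimpleGraph.fromEdgeSet (↑u : Set (Sym2 V)) where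
  toFun := Subtype.val
  map_rel' := by
    intro a b hab
    rw [SimpleGraph.fromEdgeSet_adj] at hab ⊢
    refine ⟨by simpa using hsu _ hab.1, Subtype.coe_injective.ne hab.2⟩

private lemma lift_reach {V : Type*} {t : Finset (Sym2 V)} {D : Finset V}
    {t₁ : Finset (Sym2 {v : V // v ∉ D})}
    (h₁ : ∀ e : Sym2 {v : V // v ∉ D}, Sym2.map Subtype.val e ∈ restrictE t D → e ∈ t₁) :
    ∀ {w ρ : V} (p : (SimpleGraph.fromEdgeSet (↑t : Set (Sym2 V))).Walk w ρ),
      (∀ v ∈ p.support, v ∉ D) → ∀ (hw : w ∉ D) (hρ : ρ ∉ D),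
      (SimpleGraph.fromEdgeSet (↑t₁ : Set (Sym2 {v : V // v ∉ D}))).Reachable ⟨w, hw⟩ ⟨ρ, hρ⟩ := by
  intro w ρ p
  induction p with
  | nil => intro _ hw hρ; exact SimpleGraph.Reachable.refl _
  | @cons w u ρ hadj p ih =>
    intro hp hw hρ
    have hu : u ∉ D := hp u (by simp [SimpleGraph.Walk.support_cons])
    rw [SimpleGraph.fromEdgeSet_adj] at hadj
    have hmem : s(w, u) ∈ restrictE t D := by
      rw [mem_restrictE]
      refine ⟨hadj.1, ?_⟩
      intro v hv
      rw [Sym2.mem_iff] at hv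
      rcases hv with rfl | rfl
      · exact hw
      · exact hu
    have hadj' : (SimpleGraph.fromEdgeSet (↑t₁ : Set (Sym2 {v : V // v ∉ D}))).Adj
        ⟨w, hw⟩ ⟨u, hu⟩ := by
      rw [SimpleGraph.fromEdgeSet_adj]
      refine ⟨h₁ s(⟨w, hw⟩, ⟨u, hu⟩) (by simpa using hmem), ?_⟩
      intro hc
      exact hadj.2 (congrArg Subtype.val hc)
    exact hadj'.reachable.trans
      (ih (fun v hv => hp v (by simp [SimpleGraph.Walk.support_cons, hv])) hu hρ)

private lemma reach_root {V : Type*} {t u : Finset (Sym2 V)} {D : Finset V} {ρ : V}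
    (hsub : ∀ e ∈ t, (¬ ∀ v ∈ e, v ∉ D) → e ∈ u)
    (hout : ∀ w, w ∉ D → (SimpleGraph.fromEdgeSet (↑u : Set (Sym2 V))).Reachable w ρ) :
    ∀ {v : V} (_ : (SimpleGraph.fromEdgeSet (↑t : Set (Sym2 V))).Walk v ρ),
      (SimpleGraph.fromEdgeSet (↑u : Set (Sym2 V))).Reachable v ρ := by
  intro v p
  induction p with
  | @nil v =>
    by_cases hv : v ∈ D
    · exact SimpleGraph.Reachable.refl _
    · exact SimpleGraph.Reachable.refl _
  | @cons v x ρ hadj p ih =>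
    by_cases hv : v ∈ D
    · rw [SimpleGraph.fromEdgeSet_adj] at hadj
      have hmem : s(v, x) ∈ u := by
        refine hsub _ hadj.1 ?_
        intro hh
        exact hh v (Sym2.mem_mk_left v x) hv
      have : (SimpleGraph.fromEdgeSet (↑u : Set (Sym2 V))).Adj v x :=
        (SimpleGraph.fromEdgeSet_adj _).mpr ⟨hmem, hadj.2⟩
      exact this.reachable.trans (ih hout)
    · exact hout v hv


open SimpleGraph in
private lemma part1_aux {V : Type*} [Fintype V] [DecidableEq V] (G : SimpleGraph V)
    (ρ : V) (D : Finset V) (hρD : ρ ∉ D)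
    (t : Finset (Sym2 V)) (ht : SpTree G t) (hA : AvoidsD t ρ D) :
    ∃ t₁ : Finset (Sym2 {v : V // v ∉ D}),
      SpTree (G.induce {v : V | v ∉ D}) t₁ ∧
      restrictE t D = t₁.image (Sym2.map Subtype.val) := by
  classical
  set t₁ : Finset (Sym2 {v : V // v ∉ D}) :=
    Finset.univ.filter (fun e => Sym2.map Subtype.val e ∈ restrictE t D) with ht₁
  have hmem₁ : ∀ e : Sym2 {v : V // v ∉ D},
      e ∈ t₁ ↔ Sym2.map Subtype.val e ∈ restrictE t D := by
    intro e; simp [ht₁]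
  have himg : restrictE t D = t₁.image (Sym2.map Subtype.val) := by
    ext e
    constructor
    · intro he
      induction e using Sym2.ind with
      | _ a b =>
        have ha : a ∉ D := (mem_restrictE.mp he).2 a (Sym2.mem_mk_left a b)
        have hb : b ∉ D := (mem_restrictE.mp he).2 b (Sym2.mem_mk_right a b)
        refine Finset.mem_image.mpr ⟨s(⟨a, ha⟩, ⟨b, hb⟩), ?_, by simp⟩
        rw [hmem₁]
        simpa using he
    · intro he
      obtain ⟨e', he', rfl⟩ := Finset.mem_image.mp he
      exact (hmem₁ e').mp he'
  have hsub₂ : ∀ e ∈ t₁.image (Sym2.map Subtype.val), e ∈ t := by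
    intro e he
    rw [← himg] at he
    exact (mem_restrictE.mp he).1
  refine ⟨t₁, ⟨?_, ?_, ?_, ?_⟩, himg⟩
  · -- edges of t₁ lie in the induced graph
    intro e he
    rw [Finset.mem_coe] at he
    induction e using Sym2.ind with
    | _ a b =>
      have : s(a.val, b.val) ∈ t := by
        have := hsub₂ _ (Finset.mem_image_of_mem _ he)
        simpa using this
      have hadj : G.Adj a.val b.val := (SimpleGraph.mem_edgeSet G).mp (ht.1 this)
      exact (SimpleGraph.mem_edgeSet _).mpr (by simpa using hadj)
  · -- non-diagonal
    intro e he
    induction e using Sym2.ind with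
    | _ a b =>
      have hmem : s(a.val, b.val) ∈ t := by
        have := hsub₂ _ (Finset.mem_image_of_mem _ he)
        simpa using this
      have := ht.2.1 _ hmem
      rw [Sym2.mk_isDiag_iff] at this ⊢
      exact fun hc => this (congrArg Subtype.val hc)
  · -- connected
    haveI : Nonempty ↑{v : V | v ∉ D} := ⟨⟨ρ, hρD⟩⟩
    refine Connected.mk ?_
    intro a b
    obtain ⟨pa, hpa⟩ := hA a.val a.2
    obtain ⟨pb, hpb⟩ := hA b.val b.2
    have h₁ : ∀ e : Sym2 {v : V // v ∉ D},
        Sym2.map Subtype.val e ∈ restrictE t D → e ∈ t₁ := fun e he => (hmem₁ e).mpr he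
    have ra := lift_reach h₁ pa hpa a.2 hρD
    have rb := lift_reach h₁ pb hpb b.2 hρD
    exact ra.trans rb.symm
  · -- acyclic
    intro a c hc
    have hsub₃ : ∀ e ∈ t₁, Sym2.map Subtype.val e ∈ t :=
      fun e he => hsub₂ _ (Finset.mem_image_of_mem _ he)
    have hinj : Function.Injective
        (downHom t₁ t hsub₃ : {v : V // v ∉ D} → V) := Subtype.val_injective
    have hcyc := (SimpleGraph.Walk.map_isCycle_iff_of_injective hinj).mpr hc
    exact ht.2.2.IsAcyclic _ hcyc

open SimpleGraph in
private lemma swap_mem {V : Type*} [Fintype V] [DecidableEq V] (G : SimpleGraph V)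
    (ρ : V) (D : Finset V) (hρD : ρ ∉ D)
    (t₁ t₂ : Finset (Sym2 {v : V // v ∉ D}))
    (h₁ : SpTree (G.induce {v : V | v ∉ D}) t₁) (h₂ : SpTree (G.induce {v : V | v ∉ D}) t₂)
    (t : Finset (Sym2 V)) (ht : SpTree G t) (hA : AvoidsD t ρ D)
    (hres : restrictE t D = t₁.image (Sym2.map Subtype.val)) :
    SpTree G (touchE t D ∪ t₂.image (Sym2.map Subtype.val)) ∧
    AvoidsD (touchE t D ∪ t₂.image (Sym2.map Subtype.val)) ρ D ∧
    restrictE (touchE t D ∪ t₂.image (Sym2.map Subtype.val)) D = t₂.image (Sym2.map Subtype.val) ∧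
    touchE (touchE t D ∪ t₂.image (Sym2.map Subtype.val)) D = touchE t D := by
  classical
  set u : Finset (Sym2 V) := touchE t D ∪ t₂.image (Sym2.map Subtype.val) with hu
  -- mapped edges of t₂ lie in `G`
  have himgG : ∀ e ∈ t₂.image (Sym2.map Subtype.val), e ∈ G.edgeSet := by
    intro e he
    obtain ⟨e', he', rfl⟩ := Finset.mem_image.mp he
    induction e' using Sym2.ind with
    | _ a b =>
      have : (G.induce {v : V | v ∉ D}).Adj a b := (SimpleGraph.mem_edgeSet _).mp (h₂.1 he')
      have : G.Adj a.val b.val := by simpa using this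
      simpa using (SimpleGraph.mem_edgeSet G).mpr this
  have hsubu : ∀ e ∈ t₂, Sym2.map Subtype.val e ∈ u := by
    intro e he
    exact Finset.mem_union_right _ (Finset.mem_image_of_mem _ he)
  -- the homomorphism from the tree on the complement into the new graph
  set φ := downHom t₂ u hsubu with hφ
  -- reachability to the root for vertices outside D
  have hout : ∀ w, w ∉ D → (fromEdgeSet (↑u : Set (Sym2 V))).Reachable w ρ := by
    intro w hw
    have hr : (fromEdgeSet (↑t₂ : Set (Sym2 {v : V // v ∉ D}))).Reachable ⟨w, hw⟩ ⟨ρ, hρD⟩ :=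
      h₂.2.2.isConnected.preconnected _ _
    exact hr.map φ
  have hsub' : ∀ e ∈ t, (¬ ∀ v ∈ e, v ∉ D) → e ∈ u := by
    intro e het hetouch
    exact Finset.mem_union_left _ (mem_touchE.mpr ⟨het, hetouch⟩)
  have hreach : ∀ v : V, (fromEdgeSet (↑u : Set (Sym2 V))).Reachable v ρ := by
    intro v
    obtain ⟨p⟩ := ht.2.2.isConnected.preconnected v ρ
    exact reach_root hsub' hout p
  -- nondiagonality of u
  have hnd : ∀ e ∈ u, ¬ e.IsDiag := by
    intro e he
    rcases Finset.mem_union.mp he with he | he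
    · exact ht.2.1 e (mem_touchE.mp he).1
    · obtain ⟨e', he', rfl⟩ := Finset.mem_image.mp he
      induction e' using Sym2.ind with
      | _ a b =>
        have := h₂.2.1 _ he'
        rw [Sym2.map_pair_eq, Sym2.mk_isDiag_iff] at *
        exact fun hc => this (Subtype.coe_injective hc)
  -- cardinality of u
  have hdisj : Disjoint (touchE t D) (t₂.image (Sym2.map Subtype.val)) := by
    rw [Finset.disjoint_left]
    intro e he he'
    exact (mem_touchE.mp he).2 (image_avoid t₂ he')
  have hpart : (restrictE t D).card + (touchE t D).card = t.card := by
    have : restrictE t D ∪ touchE t D = t := by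
      ext e
      by_cases hP : ∀ v ∈ e, v ∉ D <;>
        · simp only [Finset.mem_union, mem_restrictE, mem_touchE, hP]
          tauto
    have hd : Disjoint (restrictE t D) (touchE t D) := by
      rw [Finset.disjoint_left]
      intro e he he'
      exact (mem_touchE.mp he').2 (mem_restrictE.mp he).2
    rw [← Finset.card_union_of_disjoint hd, this]
  have hcard_img : ∀ s : Finset (Sym2 {v : V // v ∉ D}),
      (s.image (Sym2.map Subtype.val)).card = s.card := fun s =>
    Finset.card_image_of_injective s (Sym2.map.injective Subtype.val_injective)
  have hc₁ := sptree_card h₁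
  have hc₂ := sptree_card h₂
  have hct := sptree_card ht
  have hcu : u.card = t.card := by
    rw [hu, Finset.card_union_of_disjoint hdisj, hcard_img]
    have : (restrictE t D).card = t₁.card := by rw [hres, hcard_img]
    omega
  -- edge set of the new graph
  have heu : (fromEdgeSet (↑u : Set (Sym2 V))).edgeSet = ↑u := by
    rw [edgeSet_fromEdgeSet]
    ext e
    simp only [Set.mem_diff, Finset.mem_coe, Set.mem_setOf_eq]
    exact ⟨fun hh => hh.1, fun hh => ⟨hh, hnd e hh⟩⟩
  haveI : Nonempty V := ⟨ρ⟩
  have hconn : (fromEdgeSet (↑u : Set (Sym2 V))).Connected :=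
    Connected.mk fun a b => (hreach a).trans (hreach b).symm
  have htree : (fromEdgeSet (↑u : Set (Sym2 V))).IsTree := by
    refine isTree_of_connected_of_ncard hconn ?_
    rw [heu, Set.ncard_coe_finset, hcu]
    exact hct
  refine ⟨⟨?_, hnd, htree⟩, ?_, ?_, ?_⟩
  · -- u ⊆ G.edgeSet
    intro e he
    rw [Finset.mem_coe] at he
    rcases Finset.mem_union.mp he with he | he
    · exact ht.1 (mem_touchE.mp he).1
    · exact himgG e he
  · -- AvoidsD
    intro w hw
    have hr : (fromEdgeSet (↑t₂ : Set (Sym2 {v : V // v ∉ D}))).Reachable ⟨w, hw⟩ ⟨ρ, hρD⟩ :=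
      h₂.2.2.isConnected.preconnected _ _
    obtain ⟨p⟩ := hr
    refine ⟨p.map φ, ?_⟩
    intro v hv
    have hv' : v ∈ (p.map φ).support := hv
    rw [SimpleGraph.Walk.support_map] at hv'
    obtain ⟨x, -, rfl⟩ := List.mem_map.mp hv'
    exact x.2
  · -- restrictE u D = image t₂
    ext e
    constructor
    · intro he
      obtain ⟨heu', hP⟩ := mem_restrictE.mp he
      rcases Finset.mem_union.mp heu' with he' | he'
      · exact absurd hP (mem_touchE.mp he').2
      · exact he'
    · intro he
      exact mem_restrictE.mpr ⟨Finset.mem_union_right _ he, image_avoid t₂ he⟩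
  · -- touchE u D = touchE t D
    ext e
    constructor
    · intro he
      obtain ⟨heu', hP⟩ := mem_touchE.mp he
      rcases Finset.mem_union.mp heu' with he' | he'
      · exact he'
      · exact absurd (image_avoid t₂ he') hP
    · intro he
      exact mem_touchE.mpr ⟨Finset.mem_union_left _ he, (mem_touchE.mp he).2⟩


theorem statement14 {V : Type*} [Fintype V] [DecidableEq V] (G : SimpleGraph V)
    (hG : G.Connected) (ρ : V) (D : Finset V) (hρD : ρ ∉ D)
    (hΓ : ∃ t : Finset (Sym2 V), SpTree G t ∧ AvoidsD t ρ D) :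
    (∀ t : Finset (Sym2 V), SpTree G t → AvoidsD t ρ D →
      ∃ t₁ : Finset (Sym2 {v : V // v ∉ D}),
        SpTree (G.induce {v : V | v ∉ D}) t₁ ∧
        restrictE t D = t₁.image (Sym2.map Subtype.val)) ∧
    ∀ t₁ t₂ : Finset (Sym2 {v : V // v ∉ D}),
      SpTree (G.induce {v : V | v ∉ D}) t₁ → SpTree (G.induce {v : V | v ∉ D}) t₂ →
      Set.ncard {t : Finset (Sym2 V) | SpTree G t ∧ AvoidsD t ρ D ∧
          restrictE t D = t₁.image (Sym2.map Subtype.val)} =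
      Set.ncard {t : Finset (Sym2 V) | SpTree G t ∧ AvoidsD t ρ D ∧
          restrictE t D = t₂.image (Sym2.map Subtype.val)} := by
  classical
  constructor
  · intro t ht hA
    exact part1_aux G ρ D hρD t ht hA
  · intro t₁ t₂ h₁ h₂
    set f : Finset (Sym2 V) → Finset (Sym2 V) :=
      fun t => touchE t D ∪ t₂.image (Sym2.map Subtype.val) with hf
    set g : Finset (Sym2 V) → Finset (Sym2 V) :=
      fun t => touchE t D ∪ t₁.image (Sym2.map Subtype.val) with hg
    set A : Set (Finset (Sym2 V)) := {t | SpTree G t ∧ AvoidsD t ρ D ∧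
        restrictE t D = t₁.image (Sym2.map Subtype.val)} with hA
    set B : Set (Finset (Sym2 V)) := {t | SpTree G t ∧ AvoidsD t ρ D ∧
        restrictE t D = t₂.image (Sym2.map Subtype.val)} with hB
    have recov : ∀ (t : Finset (Sym2 V)) (s : Finset (Sym2 {v : V // v ∉ D})),
        restrictE t D = s.image (Sym2.map Subtype.val) →
        touchE t D ∪ s.image (Sym2.map Subtype.val) = t := by
      intro t s hres
      ext e
      rw [Finset.mem_union]
      constructor
      · rintro (he | he)
        · exact (mem_touchE.mp he).1
        · rw [← hres] at he
          exact (mem_restrictE.mp he).1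
      · intro he
        by_cases hP : ∀ v ∈ e, v ∉ D
        · exact Or.inr (hres ▸ mem_restrictE.mpr ⟨he, hP⟩)
        · exact Or.inl (mem_touchE.mpr ⟨he, hP⟩)
    have hAB : ∀ t ∈ A, f t ∈ B ∧ g (f t) = t := by
      intro t htA
      obtain ⟨ht, hAv, hres⟩ := htA
      obtain ⟨hsp, hav, hres', htc⟩ :=
        swap_mem G ρ D hρD t₁ t₂ h₁ h₂ t ht hAv hres
      refine ⟨⟨hsp, hav, hres'⟩, ?_⟩
      show touchE (f t) D ∪ t₁.image (Sym2.map Subtype.val) = t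
      rw [show touchE (f t) D = touchE t D from htc]
      exact recov t t₁ hres
    have hBA : ∀ t ∈ B, g t ∈ A ∧ f (g t) = t := by
      intro t htB
      obtain ⟨ht, hAv, hres⟩ := htB
      obtain ⟨hsp, hav, hres', htc⟩ :=
        swap_mem G ρ D hρD t₂ t₁ h₂ h₁ t ht hAv hres
      refine ⟨⟨hsp, hav, hres'⟩, ?_⟩
      show touchE (g t) D ∪ t₂.image (Sym2.map Subtype.val) = t
      rw [show touchE (g t) D = touchE t D from htc]
      exact recov t t₂ hres
    have hinj : Set.InjOn f A := by
      intro a ha b hb hab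
      rw [← (hAB a ha).2, ← (hAB b hb).2, hab]
    have himg : f '' A = B := by
      apply Set.Subset.antisymm
      · rintro b ⟨a, ha, rfl⟩
        exact (hAB a ha).1
      · intro b hb
        exact ⟨g b, (hBA b hb).1, (hBA b hb).2⟩
    calc A.ncard = (f '' A).ncard := (Set.ncard_image_of_injOn hinj).symm
      _ = B.ncard := by rw [himg]
end

section
/- In the above setting, for any two spanning trees t_1, t_2 of G_-, the number of spanning trees t of G with t ∈ Γ* and t ⊇ t_1 equals the number of spanning trees t of G with t ∈ Γ* and t ⊇ t_2; the bijection is given by t ↦ (t∖t_1) ∪ t_2. -/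
open Finset
open scoped Classical

set_option maxHeartbeats 1000000

namespace Statement15Aux

open SimpleGraph

variable {V : Type*}

lemma reach_transfer {G H : SimpleGraph V}
    (hedge : ∀ ⦃a b : V⦄, G.Adj a b → H.Reachable a b) {a b : V}
    (h : G.Reachable a b) : H.Reachable a b := by
  obtain ⟨p⟩ := h
  induction p with
  | nil => exact Reachable.refl _
  | cons h p ih => exact (hedge h).trans ih

lemma connected_delete {G : SimpleGraph V} (h : G.Connected) {v w : V}
    (hvw : G.Adj v w) (hb : ¬ G.IsBridge s(v, w)) :
    (G \ fromEdgeSet {s(v, w)}).Connected := by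
  rw [isBridge_iff] at hb
  have hr := not_not.mp hb
  rw [connected_iff] at h ⊢
  refine ⟨fun a b => reach_transfer ?_ (h.1 a b), h.2⟩
  intro a b hab
  by_cases he : s(a, b) = s(v, w)
  · rcases Sym2.eq_iff.mp he with ⟨rfl, rfl⟩ | ⟨rfl, rfl⟩
    · exact hr
    · exact hr.symm
  · refine Adj.reachable ?_
    rw [sdiff_adj]
    exact ⟨hab, by simp [fromEdgeSet_adj, he]⟩

lemma exists_spanning_tree [Fintype V] :
    ∀ (n : ℕ) (G : SimpleGraph V), G.edgeSet.ncard = n → G.Connected →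
      ∃ H, H ≤ G ∧ H.IsTree := by
  intro n
  induction n using Nat.strong_induction_on with
  | _ n ih =>
    intro G hn hc
    by_cases ha : G.IsAcyclic
    · exact ⟨G, le_refl G, ⟨hc, ha⟩⟩
    · rw [isAcyclic_iff_forall_adj_isBridge] at ha
      push_neg at ha
      obtain ⟨v, w, hvw, hb⟩ := ha
      have hconn := connected_delete hc hvw hb
      have hle : G \ fromEdgeSet {s(v, w)} ≤ G := sdiff_le
      have heq : (G \ fromEdgeSet {s(v, w)}).edgeSet = G.edgeSet \ {s(v, w)} := by
        rw [edgeSet_sdiff, edgeSet_fromEdgeSet]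
        ext e
        simp only [Set.mem_diff, Set.mem_singleton_iff, Set.mem_setOf_eq]
        constructor
        · rintro ⟨h1, h2⟩
          exact ⟨h1, fun hh => h2 ⟨hh, by subst hh; simp [Sym2.isDiag_iff_proj_eq, hvw.ne]⟩⟩
        · rintro ⟨h1, h2⟩
          exact ⟨h1, fun hh => h2 hh.1⟩
      have hcard : (G \ fromEdgeSet {s(v, w)}).edgeSet.ncard < n := by
        rw [heq, ← hn]
        exact Set.ncard_diff_singleton_lt_of_mem ((G.mem_edgeSet).mpr hvw) (Set.toFinite _)
      obtain ⟨H, hH, htr⟩ := ih _ hcard _ rfl hconn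
      exact ⟨H, hH.trans hle, htr⟩

lemma ncard_edgeSet_eq [Fintype V] (G : SimpleGraph V) [Fintype G.edgeSet] :
    G.edgeSet.ncard = G.edgeFinset.card :=
  Set.ncard_eq_toFinset_card' _

lemma isTree_of_connected_card_le [Fintype V] {G : SimpleGraph V} (h : G.Connected)
    (hc : G.edgeSet.ncard + 1 ≤ Fintype.card V) : G.IsTree := by
  obtain ⟨H, hle, htr⟩ := exists_spanning_tree _ G rfl h
  have hcard := htr.card_edgeFinset
  rw [← ncard_edgeSet_eq H] at hcard
  have : H.edgeSet = G.edgeSet := by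
    apply Set.eq_of_subset_of_ncard_le (edgeSet_mono hle) (by omega) (Set.toFinite _)
  rwa [edgeSet_inj.mp this] at htr

lemma mem_image_not_mem [DecidableEq V] {D : Finset V} {s : Finset (Sym2 {v : V // v ∉ D})}
    {e : Sym2 V} (he : e ∈ s.image (Sym2.map Subtype.val)) : ∀ v ∈ e, v ∉ D := by
  obtain ⟨f, hf, rfl⟩ := mem_image.mp he
  intro v hv
  rw [Sym2.mem_map] at hv
  obtain ⟨a, ha, rfl⟩ := hv
  exact a.2

lemma walk_image [DecidableEq V] {D : Finset V} (s : Finset (Sym2 {v : V // v ∉ D}))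
    {a b : {v : V // v ∉ D}}
    (h : (SimpleGraph.fromEdgeSet (↑s : Set (Sym2 {v : V // v ∉ D}))).Reachable a b) :
    ∃ p : (SimpleGraph.fromEdgeSet
        (↑(s.image (Sym2.map Subtype.val)) : Set (Sym2 V))).Walk a.val b.val,
      ∀ v ∈ p.support, v ∉ D := by
  obtain ⟨q⟩ := h
  let f : SimpleGraph.fromEdgeSet (↑s : Set (Sym2 {v : V // v ∉ D})) →g
      SimpleGraph.fromEdgeSet (↑(s.image (Sym2.map Subtype.val)) : Set (Sym2 V)) :=
    ⟨Subtype.val, by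
      intro x y hxy
      rw [fromEdgeSet_adj] at hxy ⊢
      refine ⟨?_, Subtype.val_injective.ne hxy.2⟩
      rw [mem_coe, mem_image]
      exact ⟨s(x, y), hxy.1, by rfl⟩⟩
  refine ⟨q.map f, ?_⟩
  intro v hv
  rw [SimpleGraph.Walk.support_map, List.mem_map] at hv
  obtain ⟨u, hu, rfl⟩ := hv
  exact u.2

lemma key_mem [DecidableEq V] {D : Finset V} {G : SimpleGraph V}
    {t₁ : Finset (Sym2 {v : V // v ∉ D})}
    (h₁ : SpTree (G.induce {v : V | v ∉ D}) t₁)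
    {t : Finset (Sym2 V)} (ht : SpTree G t)
    (hsub : t₁.image (Sym2.map Subtype.val) ⊆ t)
    {e : Sym2 V} (he : e ∈ t) (hD : ∀ v ∈ e, v ∉ D) :
    e ∈ t₁.image (Sym2.map Subtype.val) := by
  induction e using Sym2.inductionOn with
  | hf u v =>
    by_contra hne
    have hdiag := ht.2.1 _ he
    have huv : u ≠ v := fun h => hdiag (by simp [h, Sym2.isDiag_iff_proj_eq])
    have hu : u ∉ D := hD u (Sym2.mem_mk_left u v)
    have hv : v ∉ D := hD v (Sym2.mem_mk_right u v)
    have hreach := h₁.2.2.isConnected.preconnected ⟨u, hu⟩ ⟨v, hv⟩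
    obtain ⟨p, _⟩ := walk_image t₁ hreach
    have hle : SimpleGraph.fromEdgeSet
        (↑(t₁.image (Sym2.map Subtype.val)) : Set (Sym2 V)) ≤
        SimpleGraph.fromEdgeSet (↑t : Set (Sym2 V)) \ SimpleGraph.fromEdgeSet {s(u, v)} := by
      intro a b hab
      rw [fromEdgeSet_adj] at hab
      rw [sdiff_adj, fromEdgeSet_adj, fromEdgeSet_adj]
      refine ⟨⟨hsub hab.1, hab.2⟩, ?_⟩
      rintro ⟨hmem, -⟩
      rw [Set.mem_singleton_iff] at hmem
      exact hne (hmem ▸ hab.1)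
    have hreach2 : (SimpleGraph.fromEdgeSet (↑t : Set (Sym2 V)) \
        SimpleGraph.fromEdgeSet {s(u, v)}).Reachable u v :=
      Reachable.mono hle ⟨p⟩
    have hadj : (SimpleGraph.fromEdgeSet (↑t : Set (Sym2 V))).Adj u v := by
      rw [fromEdgeSet_adj]; exact ⟨he, huv⟩
    have hbridge := isAcyclic_iff_forall_adj_isBridge.mp ht.2.2.IsAcyclic hadj
    rw [isBridge_iff] at hbridge
    exact hbridge hreach2

lemma edgeFinset_fromEdgeSet_eq {W : Type*} [Fintype W]
    (s : Finset (Sym2 W)) (hd : ∀ e ∈ s, ¬ e.IsDiag) :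
    (SimpleGraph.fromEdgeSet (↑s : Set (Sym2 W))).edgeSet = ↑s := by
  rw [edgeSet_fromEdgeSet]
  ext e
  simp only [Set.mem_diff, mem_coe, Set.mem_setOf_eq]
  exact ⟨fun h => h.1, fun h => ⟨h, hd e h⟩⟩

lemma SpTree.card_eq {W : Type*} [Fintype W] {H : SimpleGraph W}
    {s : Finset (Sym2 W)} (h : SpTree H s) : s.card + 1 = Fintype.card W := by
  have hc := h.2.2.card_edgeFinset
  rwa [← ncard_edgeSet_eq, edgeFinset_fromEdgeSet_eq s h.2.1,
    Set.ncard_coe_finset] at hc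

lemma maps_lemma [Fintype V] [DecidableEq V] {D : Finset V} {G : SimpleGraph V}
    (hG : G.Connected) (ρ : V) (hρD : ρ ∉ D)
    {t₁ t₂ : Finset (Sym2 {v : V // v ∉ D})}
    (h₁ : SpTree (G.induce {v : V | v ∉ D}) t₁)
    (h₂ : SpTree (G.induce {v : V | v ∉ D}) t₂)
    {t : Finset (Sym2 V)} (ht : SpTree G t)
    (hsub : t₁.image (Sym2.map Subtype.val) ⊆ t) :
    SpTree G ((t \ t₁.image (Sym2.map Subtype.val)) ∪ t₂.image (Sym2.map Subtype.val)) ∧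
    AvoidsD ((t \ t₁.image (Sym2.map Subtype.val)) ∪ t₂.image (Sym2.map Subtype.val)) ρ D ∧
    t₂.image (Sym2.map Subtype.val) ⊆
      (t \ t₁.image (Sym2.map Subtype.val)) ∪ t₂.image (Sym2.map Subtype.val) := by
  have hT₂edge : ↑(t₂.image (Sym2.map Subtype.val)) ⊆ G.edgeSet := by
    intro e he
    rw [mem_coe, mem_image] at he
    obtain ⟨f, hf, rfl⟩ := he
    induction f using Sym2.inductionOn with
    | hf a b =>
      have h3 : (G.induce {v : V | v ∉ D}).Adj a b := h₂.1 (mem_coe.mpr hf)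
      rw [Sym2.map_pair_eq, mem_edgeSet]
      exact h3
  have hT₂diag : ∀ e ∈ t₂.image (Sym2.map Subtype.val), ¬ e.IsDiag := by
    intro e he
    rw [mem_image] at he
    obtain ⟨f, hf, rfl⟩ := he
    have h3 := h₂.2.1 f hf
    induction f using Sym2.inductionOn with
    | hf a b =>
      simp only [Sym2.map_pair_eq, Sym2.isDiag_iff_proj_eq] at h3 ⊢
      exact fun h => h3 (Subtype.val_injective h)
  have hedge : ↑((t \ t₁.image (Sym2.map Subtype.val)) ∪ t₂.image (Sym2.map Subtype.val))
      ⊆ G.edgeSet := by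
    intro e he
    rw [mem_coe, mem_union, mem_sdiff] at he
    rcases he with ⟨he, -⟩ | he
    · exact ht.1 (mem_coe.mpr he)
    · exact hT₂edge (mem_coe.mpr he)
  have hdiag : ∀ e ∈ (t \ t₁.image (Sym2.map Subtype.val)) ∪ t₂.image (Sym2.map Subtype.val),
      ¬ e.IsDiag := by
    intro e he
    rw [mem_union, mem_sdiff] at he
    rcases he with ⟨he, -⟩ | he
    · exact ht.2.1 e he
    · exact hT₂diag e he
  have hT₂sub : t₂.image (Sym2.map Subtype.val) ⊆
      (t \ t₁.image (Sym2.map Subtype.val)) ∪ t₂.image (Sym2.map Subtype.val) :=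
    subset_union_right
  have hconn : (SimpleGraph.fromEdgeSet
      (↑((t \ t₁.image (Sym2.map Subtype.val)) ∪ t₂.image (Sym2.map Subtype.val)) :
        Set (Sym2 V))).Connected := by
    rw [connected_iff]
    refine ⟨fun a b => ?_, hG.nonempty⟩
    refine reach_transfer ?_ (ht.2.2.isConnected.preconnected a b)
    intro x y hxy
    rw [fromEdgeSet_adj] at hxy
    obtain ⟨hmem, hne⟩ := hxy
    rw [mem_coe] at hmem
    by_cases hm : s(x, y) ∈ t₁.image (Sym2.map Subtype.val)
    · have hx : x ∉ D := mem_image_not_mem hm x (Sym2.mem_mk_left x y)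
      have hy : y ∉ D := mem_image_not_mem hm y (Sym2.mem_mk_right x y)
      have hr := h₂.2.2.isConnected.preconnected ⟨x, hx⟩ ⟨y, hy⟩
      obtain ⟨p, -⟩ := walk_image t₂ hr
      exact Reachable.mono (fromEdgeSet_mono (by exact_mod_cast hT₂sub)) ⟨p⟩
    · exact Adj.reachable (by
        rw [fromEdgeSet_adj]
        exact ⟨mem_coe.mpr (mem_union_left _ (mem_sdiff.mpr ⟨hmem, hm⟩)), hne⟩)
  have hdisj : Disjoint (t \ t₁.image (Sym2.map Subtype.val)) (t₂.image (Sym2.map Subtype.val)) := by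
    rw [Finset.disjoint_left]
    intro e he heT₂
    rw [mem_sdiff] at he
    exact he.2 (key_mem h₁ ht hsub he.1 (mem_image_not_mem heT₂))
  have hcardT₁ : (t₁.image (Sym2.map Subtype.val)).card = t₁.card :=
    card_image_of_injective _ (Sym2.map.injective Subtype.val_injective)
  have hcardT₂ : (t₂.image (Sym2.map Subtype.val)).card = t₂.card :=
    card_image_of_injective _ (Sym2.map.injective Subtype.val_injective)
  have hc₁ := SpTree.card_eq h₁
  have hc₂ := SpTree.card_eq h₂
  have hct := SpTree.card_eq ht
  have hcard' : ((t \ t₁.image (Sym2.map Subtype.val)) ∪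
      t₂.image (Sym2.map Subtype.val)).card = t.card := by
    rw [card_union_of_disjoint hdisj, card_sdiff_of_subset hsub]
    have h5 : (t₁.image (Sym2.map Subtype.val)).card ≤ t.card := card_le_card hsub
    omega
  have htree : (SimpleGraph.fromEdgeSet
      (↑((t \ t₁.image (Sym2.map Subtype.val)) ∪ t₂.image (Sym2.map Subtype.val)) :
        Set (Sym2 V))).IsTree := by
    apply isTree_of_connected_card_le hconn
    rw [edgeFinset_fromEdgeSet_eq _ hdiag, Set.ncard_coe_finset, hcard', hct]
  refine ⟨⟨hedge, hdiag, htree⟩, ?_, hT₂sub⟩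
  intro w hw
  have hr := h₂.2.2.isConnected.preconnected ⟨w, hw⟩ ⟨ρ, hρD⟩
  obtain ⟨p, hp⟩ := walk_image t₂ hr
  have hedges : ∀ e ∈ p.edges, e ∈ (SimpleGraph.fromEdgeSet
      (↑((t \ t₁.image (Sym2.map Subtype.val)) ∪ t₂.image (Sym2.map Subtype.val)) :
        Set (Sym2 V))).edgeSet := by
    intro e he
    exact edgeSet_mono (fromEdgeSet_mono (by exact_mod_cast hT₂sub)) (p.edges_subset_edgeSet he)
  exact ⟨p.transfer _ hedges, by rwa [SimpleGraph.Walk.support_transfer]⟩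

lemma comp_eq [Fintype V] [DecidableEq V] {D : Finset V} {G : SimpleGraph V}
    {t₁ t₂ : Finset (Sym2 {v : V // v ∉ D})}
    (h₁ : SpTree (G.induce {v : V | v ∉ D}) t₁)
    {t : Finset (Sym2 V)} (ht : SpTree G t)
    (hsub : t₁.image (Sym2.map Subtype.val) ⊆ t) :
    (((t \ t₁.image (Sym2.map Subtype.val)) ∪ t₂.image (Sym2.map Subtype.val)) \
        t₂.image (Sym2.map Subtype.val)) ∪ t₁.image (Sym2.map Subtype.val) = t := by
  have hdisj : Disjoint (t \ t₁.image (Sym2.map Subtype.val))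
      (t₂.image (Sym2.map Subtype.val)) := by
    rw [Finset.disjoint_left]
    intro e he heT₂
    rw [mem_sdiff] at he
    exact he.2 (key_mem h₁ ht hsub he.1 (mem_image_not_mem heT₂))
  rw [union_sdiff_distrib, sdiff_self]
  rw [show ((⊥ : Finset (Sym2 V)) = ∅) from rfl, union_empty,
    (_root_.sdiff_eq_self_iff_disjoint.mpr hdisj.symm : _),
    sdiff_union_of_subset hsub]

end Statement15Aux

theorem statement15 {V : Type*} [Fintype V] [DecidableEq V] (G : SimpleGraph V)
    (hG : G.Connected) (ρ : V) (D : Finset V) (hρD : ρ ∉ D)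
    (t₁ t₂ : Finset (Sym2 {v : V // v ∉ D}))
    (h₁ : SpTree (G.induce {v : V | v ∉ D}) t₁)
    (h₂ : SpTree (G.induce {v : V | v ∉ D}) t₂) :
    Set.BijOn
      (fun t : Finset (Sym2 V) =>
        (t \ t₁.image (Sym2.map Subtype.val)) ∪ t₂.image (Sym2.map Subtype.val))
      {t : Finset (Sym2 V) | SpTree G t ∧ AvoidsD t ρ D ∧
          t₁.image (Sym2.map Subtype.val) ⊆ t}
      {t : Finset (Sym2 V) | SpTree G t ∧ AvoidsD t ρ D ∧
          t₂.image (Sym2.map Subtype.val) ⊆ t} ∧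
    Set.ncard {t : Finset (Sym2 V) | SpTree G t ∧ AvoidsD t ρ D ∧
        t₁.image (Sym2.map Subtype.val) ⊆ t} =
    Set.ncard {t : Finset (Sym2 V) | SpTree G t ∧ AvoidsD t ρ D ∧
        t₂.image (Sym2.map Subtype.val) ⊆ t} := by
  have hmt₁ : Set.MapsTo
      (fun t : Finset (Sym2 V) =>
        (t \ t₁.image (Sym2.map Subtype.val)) ∪ t₂.image (Sym2.map Subtype.val))
      {t : Finset (Sym2 V) | SpTree G t ∧ AvoidsD t ρ D ∧
          t₁.image (Sym2.map Subtype.val) ⊆ t}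
      {t : Finset (Sym2 V) | SpTree G t ∧ AvoidsD t ρ D ∧
          t₂.image (Sym2.map Subtype.val) ⊆ t} := by
    rintro t ⟨ht, -, hsub⟩
    exact Statement15Aux.maps_lemma hG ρ hρD h₁ h₂ ht hsub
  have hmt₂ : Set.MapsTo
      (fun t : Finset (Sym2 V) =>
        (t \ t₂.image (Sym2.map Subtype.val)) ∪ t₁.image (Sym2.map Subtype.val))
      {t : Finset (Sym2 V) | SpTree G t ∧ AvoidsD t ρ D ∧
          t₂.image (Sym2.map Subtype.val) ⊆ t}
      {t : Finset (Sym2 V) | SpTree G t ∧ AvoidsD t ρ D ∧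
          t₁.image (Sym2.map Subtype.val) ⊆ t} := by
    rintro t ⟨ht, -, hsub⟩
    exact Statement15Aux.maps_lemma hG ρ hρD h₂ h₁ ht hsub
  have hinv : Set.InvOn
      (fun t : Finset (Sym2 V) =>
        (t \ t₂.image (Sym2.map Subtype.val)) ∪ t₁.image (Sym2.map Subtype.val))
      (fun t : Finset (Sym2 V) =>
        (t \ t₁.image (Sym2.map Subtype.val)) ∪ t₂.image (Sym2.map Subtype.val))
      {t : Finset (Sym2 V) | SpTree G t ∧ AvoidsD t ρ D ∧
          t₁.image (Sym2.map Subtype.val) ⊆ t}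
      {t : Finset (Sym2 V) | SpTree G t ∧ AvoidsD t ρ D ∧
          t₂.image (Sym2.map Subtype.val) ⊆ t} := by
    constructor
    · rintro t ⟨ht, -, hsub⟩
      exact Statement15Aux.comp_eq h₁ ht hsub
    · rintro t ⟨ht, -, hsub⟩
      exact Statement15Aux.comp_eq h₂ ht hsub
  have hbij := hinv.bijOn hmt₁ hmt₂
  refine ⟨hbij, ?_⟩
  rw [← hbij.image_eq, Set.ncard_image_of_injOn hbij.injOn]
end

section
/- Let α,β,γ ∈ [0,d) with γ = α+β−d > 0, and let x,y,z ∈ Z^d with ⟨zx⟩ ≤ ⟨zy⟩. Let A := {a ∈ Z^d : ⟨az⟩ ≤ ⟨zx⟩/2}. Then Σ_{a∈A} ⟨ax⟩^{−α}⟨ay⟩^{−β}⟨az⟩^{−γ} ≤ C·⟨zx⟩^{−γ}⟨zy⟩^{−γ} ≤ C·⟨xyz⟩^{−γ}, where C depends only on α,β,d. -/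
open MeasureTheory ProbabilityTheory Finset

set_option maxHeartbeats 1000000

abbrev Zd (d : ℕ) := Fin d → ℤ

noncomputable def br {d : ℕ} (x y : Zd d) : ℝ := 1 + ∑ i, |(x i : ℝ) - y i|

lemma br_symm {d : ℕ} (x y : Zd d) : br x y = br y x := by
  simp [br, abs_sub_comm]

noncomputable def spread {d : ℕ} (W : Finset (Zd d)) : ℝ :=
  sInf {p | ∃ E : Finset (Sym2 {x // x ∈ W}),
    (SimpleGraph.fromEdgeSet (↑E : Set (Sym2 {x // x ∈ W}))).IsTree ∧ (∀ e ∈ E, ¬ e.IsDiag) ∧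
    p = ∏ e ∈ E, Sym2.lift ⟨fun u v => br u.1 v.1, fun u v => br_symm u.1 v.1⟩ e}

noncomputable def rho {d : ℕ} (V W : Finset (Zd d)) : ℝ :=
  sInf {p | ∃ v ∈ V, ∃ w ∈ W, p = br v w}

abbrev RRel (d : ℕ) := Zd d × Zd d → Prop

def HasStochDim {Ω : Type*} [MeasurableSpace Ω] {d : ℕ} (P : Measure Ω)
    (R : Ω → RRel d) (δ : ℝ) : Prop :=
  0 < δ ∧ δ ≤ d ∧ ∃ C : ℝ, 0 < C ∧ ∀ x z y w : Zd d,
    br x z ^ (δ - d) ≤ C * (P {ω | R ω (x, z)}).toReal ∧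
    (P {ω | R ω (x, z) ∧ R ω (y, w)}).toReal ≤
      C * br x z ^ (δ - d) * br y w ^ (δ - d) + C * spread {x, z, y, w} ^ (δ - d)

def relComp {Ω : Type*} {d : ℕ} (L R : Ω → RRel d) : Ω → RRel d :=
  fun ω p => ∃ y, L ω (p.1, y) ∧ R ω (y, p.2)

def relRComp {Ω : Type*} {d : ℕ} (L R : Ω → RRel d) : Ω → RRel d :=
  fun ω p => ∃ y, L ω (p.1, y) ∧ R ω (y, p.2) ∧ br p.1 p.2 ≤ min (br p.1 y) (br y p.2)

def leftTail {Ω : Type*} [MeasurableSpace Ω] {d : ℕ} (R : Ω → RRel d) (v : Zd d) :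
    MeasurableSpace Ω :=
  ⨅ K : Finset (Zd d), MeasurableSpace.generateFrom
    {A | ∃ y : Zd d, y ∉ K ∧ A = {ω | R ω (v, y)}}

def rightTail {Ω : Type*} [MeasurableSpace Ω] {d : ℕ} (R : Ω → RRel d) (v : Zd d) :
    MeasurableSpace Ω :=
  ⨅ K : Finset (Zd d), MeasurableSpace.generateFrom
    {A | ∃ y : Zd d, y ∉ K ∧ A = {ω | R ω (y, v)}}

def remoteTail {Ω : Type*} [MeasurableSpace Ω] {d : ℕ} (R : Ω → RRel d) :
    MeasurableSpace Ω :=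
  ⨅ (K₁ : Finset (Zd d)) (K₂ : Finset (Zd d)), MeasurableSpace.generateFrom
    {A | ∃ x y : Zd d, x ∉ K₁ ∧ y ∉ K₂ ∧ A = {ω | R ω (x, y)}}

def TrivialField {Ω : Type*} [MeasurableSpace Ω] (P : Measure Ω)
    (m : MeasurableSpace Ω) : Prop :=
  ∀ A : Set Ω, MeasurableSet[m] A → P A = 0 ∨ P A = 1

def IsSRW {Ω : Type*} [MeasurableSpace Ω] {d : ℕ} (P : Measure Ω) (x : Zd d)
    (X : ℕ → Ω → Zd d) : Prop :=
  ∀ (n : ℕ) (a : ℕ → Zd d),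
    (P {ω | ∀ i ≤ n, X i ω = a i}).toReal =
      if a 0 = x ∧ ∀ i < n, (∑ j, |a (i + 1) j - a i j|) = 1 then (1 / (2 * d) : ℝ) ^ n else 0


lemma my_br_pos {d : ℕ} (x y : Zd d) : 0 < br x y := by
  have h : (0:ℝ) ≤ ∑ i, |(x i : ℝ) - y i| := Finset.sum_nonneg fun i _ => abs_nonneg _
  unfold br; linarith

lemma my_one_le_br {d : ℕ} (x y : Zd d) : 1 ≤ br x y := by
  have h : (0:ℝ) ≤ ∑ i, |(x i : ℝ) - y i| := Finset.sum_nonneg fun i _ => abs_nonneg _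
  unfold br; linarith

lemma my_br_symm {d : ℕ} (x y : Zd d) : br x y = br y x := by
  simp [br, abs_sub_comm]

lemma my_br_tri {d : ℕ} (x y z : Zd d) : br x z ≤ br x y + br y z := by
  unfold br
  have h : ∑ i, |(x i : ℝ) - z i| ≤ (∑ i, |(x i : ℝ) - y i|) + ∑ i, |(y i : ℝ) - z i| := by
    rw [← Finset.sum_add_distrib]
    exact Finset.sum_le_sum fun i _ => abs_sub_le _ _ _
  have h2 : (0:ℝ) ≤ ∑ i, |(x i : ℝ) - y i| := Finset.sum_nonneg fun i _ => abs_nonneg _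
  have h3 : (0:ℝ) ≤ ∑ i, |(y i : ℝ) - z i| := Finset.sum_nonneg fun i _ => abs_nonneg _
  linarith

noncomputable def sdist {d : ℕ} (z a : Zd d) : ℕ := ∑ i, (a i - z i).natAbs

lemma my_br_eq_sdist {d : ℕ} (z a : Zd d) : br a z = 1 + (sdist z a : ℝ) := by
  unfold br sdist
  push_cast [Nat.cast_natAbs]
  norm_num

lemma my_shell_card {m : ℕ} (z : Zd (m+1)) (n : ℕ) (A : Finset (Zd (m+1)))
    (hA : ∀ a ∈ A, sdist z a = n) : A.card ≤ 2 * (2*n+1)^m := by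
  classical
  have key : A.card ≤ ((Fintype.piFinset fun _ : Fin m => Finset.Icc (-(n:ℤ)) (n:ℤ)) ×ˢ
      (Finset.univ : Finset Bool)).card := by
    apply Finset.card_le_card_of_injOn
      (fun a => ((fun i : Fin m => a i.castSucc - z i.castSucc),
        decide (0 ≤ a (Fin.last m) - z (Fin.last m))))
    · intro a ha
      simp only [Finset.mem_coe, Finset.mem_product, Fintype.mem_piFinset, Finset.mem_Icc, Finset.mem_univ,
        and_true]
      intro i
      have h1 : (a i.castSucc - z i.castSucc).natAbs ≤ n := by
        rw [← hA a ha]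
        exact Finset.single_le_sum (f := fun j => (a j - z j).natAbs)
          (fun j _ => Nat.zero_le _) (Finset.mem_univ _)
      omega
    · intro a ha b hb hab
      simp only [Prod.mk.injEq] at hab
      obtain ⟨h1, h2⟩ := hab
      have hcs : ∀ i : Fin m, a i.castSucc = b i.castSucc := by
        intro i
        have h := congrFun h1 i
        omega
      have hsum : ∀ c : Zd (m+1), sdist z c =
          (∑ i : Fin m, (c i.castSucc - z i.castSucc).natAbs) +
            (c (Fin.last m) - z (Fin.last m)).natAbs := by
        intro c
        unfold sdist
        rw [Fin.sum_univ_castSucc]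
      have hseq : (∑ i : Fin m, (a i.castSucc - z i.castSucc).natAbs) =
          ∑ i : Fin m, (b i.castSucc - z i.castSucc).natAbs :=
        Finset.sum_congr rfl fun i _ => by rw [hcs i]
      have hna : (a (Fin.last m) - z (Fin.last m)).natAbs
          = (b (Fin.last m) - z (Fin.last m)).natAbs := by
        have ha' := hsum a
        have hb' := hsum b
        rw [hA a ha] at ha'
        rw [hA b hb] at hb'
        omega
      have hiff : (0 ≤ a (Fin.last m) - z (Fin.last m)) ↔
          (0 ≤ b (Fin.last m) - z (Fin.last m)) := decide_eq_decide.mp h2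
      have hlast : a (Fin.last m) = b (Fin.last m) := by
        rcases le_or_gt 0 (a (Fin.last m) - z (Fin.last m)) with h | h
        · have h' := hiff.mp h
          omega
        · have h' : ¬ (0 ≤ b (Fin.last m) - z (Fin.last m)) := fun hc => absurd (hiff.mpr hc) h.not_ge
          push_neg at h'
          omega
      funext i
      exact Fin.lastCases hlast hcs i
  have hcard : ((Fintype.piFinset fun _ : Fin m => Finset.Icc (-(n:ℤ)) (n:ℤ)) ×ˢ
      (Finset.univ : Finset Bool)).card = 2 * (2*n+1)^m := by
    rw [Finset.card_product, Fintype.card_piFinset]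
    have hIcc : (Finset.Icc (-(n:ℤ)) (n:ℤ)).card = 2*n+1 := by
      rw [Int.card_Icc]
      omega
    simp [hIcc, mul_comm]
  omega

lemma my_ptwise (p : ℝ) (hp0 : 0 < p) (hp1 : p ≤ 1) (x : ℝ) (hx : 0 ≤ x) :
    (x+1)^(p-1) * p ≤ (x+1)^p - x^p := by
  have hx1 : (0:ℝ) < x + 1 := by linarith
  have hs : (-1:ℝ) ≤ -(1/(x+1)) := by
    have h : 1/(x+1) ≤ 1 := by rw [div_le_one hx1]; linarith
    linarith
  have hb := rpow_one_add_le_one_add_mul_self hs hp0.le hp1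
  have h1 : 1 + -(1/(x+1)) = x/(x+1) := by field_simp; ring
  rw [h1] at hb
  have h2 : (x/(x+1))^p * (x+1)^p = x^p := by
    rw [← Real.mul_rpow (by positivity) (by positivity), div_mul_cancel₀]
    exact ne_of_gt hx1
  have h4 := mul_le_mul_of_nonneg_right hb (Real.rpow_nonneg hx1.le p)
  rw [h2] at h4
  have h3 : (x+1)^(p-1) = (x+1)^p / (x+1) := Real.rpow_sub_one (ne_of_gt hx1) _
  rw [h3]
  have h5 : (1 + p * -(1/(x+1))) * (x+1)^p = (x+1)^p - (x+1)^p/(x+1)*p := by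
    field_simp
    ring
  rw [h5] at h4
  linarith

lemma my_sum_pow (η : ℝ) (hη : -1 < η) (N : ℕ) :
    ∑ n ∈ Finset.range (N+1), ((n:ℝ)+1)^η ≤ (1 + 1/(η+1)) * ((N:ℝ)+1)^(η+1) := by
  have hp : 0 < η + 1 := by linarith
  have hNpow : (0:ℝ) ≤ ((N:ℝ)+1)^(η+1) := Real.rpow_nonneg (by positivity) _
  rcases le_or_gt 0 η with hη0 | hη0
  · have h1 : ∀ n ∈ Finset.range (N+1), ((n:ℝ)+1)^η ≤ ((N:ℝ)+1)^η := by
      intro n hn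
      apply Real.rpow_le_rpow (by positivity) _ hη0
      have h := Finset.mem_range.mp hn
      have h' : (n:ℝ) ≤ N := by exact_mod_cast Nat.lt_succ_iff.mp h
      linarith
    calc ∑ n ∈ Finset.range (N+1), ((n:ℝ)+1)^η ≤ ∑ _n ∈ Finset.range (N+1), ((N:ℝ)+1)^η :=
          Finset.sum_le_sum h1
      _ = ((N:ℝ)+1) * ((N:ℝ)+1)^η := by
          rw [Finset.sum_const, Finset.card_range, nsmul_eq_mul]; push_cast; ring
      _ = ((N:ℝ)+1)^(η+1) := by
          rw [Real.rpow_add_one (by positivity) η]; ring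
      _ ≤ (1 + 1/(η+1)) * ((N:ℝ)+1)^(η+1) := by
          nlinarith [one_div_pos.mpr hp]
  · have key : ∀ n : ℕ, ((n:ℝ)+1)^η ≤ (((n+1:ℕ):ℝ)^(η+1) - ((n:ℕ):ℝ)^(η+1))/(η+1) := by
      intro n
      rw [le_div_iff₀ hp]
      have h := my_ptwise (η+1) hp (by linarith) (n:ℝ) (Nat.cast_nonneg n)
      have e : η + 1 - 1 = η := by ring
      rw [e] at h
      push_cast
      linarith
    calc ∑ n ∈ Finset.range (N+1), ((n:ℝ)+1)^η
        ≤ ∑ n ∈ Finset.range (N+1), ((((n+1:ℕ)):ℝ)^(η+1) - ((n:ℕ):ℝ)^(η+1))/(η+1) :=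
          Finset.sum_le_sum fun n _ => key n
      _ = (∑ n ∈ Finset.range (N+1), ((((n+1:ℕ)):ℝ)^(η+1) - ((n:ℕ):ℝ)^(η+1)))/(η+1) := by
          rw [Finset.sum_div]
      _ = (((N+1:ℕ):ℝ)^(η+1) - ((0:ℕ):ℝ)^(η+1))/(η+1) := by
          rw [Finset.sum_range_sub (f := fun k : ℕ => ((k:ℕ):ℝ)^(η+1))]
      _ ≤ (1 + 1/(η+1)) * ((N:ℝ)+1)^(η+1) := by
          have h0 : ((0:ℕ):ℝ)^(η+1) = 0 := by
            rw [Nat.cast_zero, Real.zero_rpow (ne_of_gt hp)]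
          rw [h0]
          push_cast
          rw [sub_zero, div_eq_mul_inv, mul_comm, ← one_div]
          nlinarith [hNpow]

lemma my_ball_sum {m : ℕ} (γ : ℝ) (hγ0 : 0 < γ) (hγd : γ < (m:ℝ)+1) (z : Zd (m+1)) (R : ℝ)
    (hR : 1 ≤ R) (A : Finset (Zd (m+1))) (hA : ∀ a ∈ A, br a z ≤ R) :
    ∑ a ∈ A, br a z ^ (-γ) ≤ ((2:ℝ)^(m+1) * (1 + 1/((m:ℝ)+1-γ))) * R ^ ((m:ℝ)+1-γ) := by
  classical
  set η : ℝ := (m:ℝ) - γ with hηdef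
  have hη : -1 < η := by simp only [hηdef]; linarith
  have hη1 : η + 1 = (m:ℝ)+1-γ := by simp only [hηdef]; ring
  set N : ℕ := ⌊R-1⌋₊ with hNdef
  have hNle : ((N:ℝ)+1) ≤ R := by
    have h := Nat.floor_le (by linarith : (0:ℝ) ≤ R - 1)
    rw [← hNdef] at h
    linarith
  -- step 1 : rewrite as a sum over sdist values
  have hstep1 : ∑ a ∈ A, br a z ^ (-γ)
      = ∑ n ∈ A.image (sdist z), ((A.filter fun a => sdist z a = n).card : ℝ) * ((n:ℝ)+1)^(-γ) := by
    have h1 : ∑ a ∈ A, br a z ^ (-γ) = ∑ a ∈ A, (fun n : ℕ => ((n:ℝ)+1)^(-γ)) (sdist z a) :=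
      Finset.sum_congr rfl fun a _ => by rw [my_br_eq_sdist z a, add_comm]
    rw [h1, Finset.sum_comp (fun n : ℕ => ((n:ℝ)+1)^(-γ)) (sdist z)]
    simp [nsmul_eq_mul]
  rw [hstep1]
  -- step 2 : bound each fiber card and extend index set
  have himg : A.image (sdist z) ⊆ Finset.range (N+1) := by
    intro n hn
    obtain ⟨a, ha, rfl⟩ := Finset.mem_image.mp hn
    have h1 := hA a ha
    rw [my_br_eq_sdist z a] at h1
    have h2 : ((sdist z a : ℝ)) ≤ R - 1 := by linarith
    have h3 : sdist z a ≤ N := Nat.le_floor h2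
    exact Finset.mem_range.mpr (Nat.lt_succ_of_le h3)
  have hstep2 : ∑ n ∈ A.image (sdist z), ((A.filter fun a => sdist z a = n).card : ℝ) * ((n:ℝ)+1)^(-γ)
      ≤ ∑ n ∈ Finset.range (N+1), ((2 * (2*n+1)^m : ℕ) : ℝ) * ((n:ℝ)+1)^(-γ) := by
    apply le_trans (Finset.sum_le_sum ?_)
    · apply Finset.sum_le_sum_of_subset_of_nonneg himg
      intro n _ _
      positivity
    · intro n _
      apply mul_le_mul_of_nonneg_right _ (Real.rpow_nonneg (by positivity) _)
      have hc := my_shell_card z n (A.filter fun a => sdist z a = n)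
        (fun a ha => (Finset.mem_filter.mp ha).2)
      exact_mod_cast hc
  -- step 3 : pointwise bound by rpow
  have hstep3 : ∀ n : ℕ, ((2 * (2*n+1)^m : ℕ) : ℝ) * ((n:ℝ)+1)^(-γ)
      ≤ (2:ℝ)^(m+1) * ((n:ℝ)+1)^η := by
    intro n
    have hbase : (0:ℝ) < (n:ℝ)+1 := by positivity
    have h1 : ((2*n+1 : ℕ):ℝ) ≤ 2 * ((n:ℝ)+1) := by push_cast; linarith
    have h2 : ((2*n+1 : ℕ):ℝ)^m ≤ (2 * ((n:ℝ)+1))^m :=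
      pow_le_pow_left₀ (by positivity) h1 m
    have h3 : (2 * ((n:ℝ)+1))^m = 2^m * ((n:ℝ)+1)^m := mul_pow _ _ _
    have h4 : ((n:ℝ)+1)^m * ((n:ℝ)+1)^(-γ) = ((n:ℝ)+1)^η := by
      rw [← Real.rpow_natCast ((n:ℝ)+1) m, ← Real.rpow_add hbase, hηdef]
      norm_num [sub_eq_add_neg]
    have h5 : (0:ℝ) ≤ ((n:ℝ)+1)^(-γ) := Real.rpow_nonneg hbase.le _
    push_cast
    calc 2 * ((2*(n:ℝ)+1))^m * ((n:ℝ)+1)^(-γ)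
        ≤ 2 * (2^m * ((n:ℝ)+1)^m) * ((n:ℝ)+1)^(-γ) := by
          apply mul_le_mul_of_nonneg_right _ h5
          apply mul_le_mul_of_nonneg_left _ (by norm_num)
          rw [← h3]
          have := h2
          push_cast at this
          exact this
      _ = (2:ℝ)^(m+1) * (((n:ℝ)+1)^m * ((n:ℝ)+1)^(-γ)) := by ring
      _ = (2:ℝ)^(m+1) * ((n:ℝ)+1)^η := by rw [h4]
  -- combine
  calc ∑ n ∈ A.image (sdist z), ((A.filter fun a => sdist z a = n).card : ℝ) * ((n:ℝ)+1)^(-γ)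
      ≤ ∑ n ∈ Finset.range (N+1), ((2 * (2*n+1)^m : ℕ) : ℝ) * ((n:ℝ)+1)^(-γ) := hstep2
    _ ≤ ∑ n ∈ Finset.range (N+1), (2:ℝ)^(m+1) * ((n:ℝ)+1)^η :=
        Finset.sum_le_sum fun n _ => hstep3 n
    _ = (2:ℝ)^(m+1) * ∑ n ∈ Finset.range (N+1), ((n:ℝ)+1)^η := by rw [Finset.mul_sum]
    _ ≤ (2:ℝ)^(m+1) * ((1 + 1/(η+1)) * ((N:ℝ)+1)^(η+1)) := by
        apply mul_le_mul_of_nonneg_left (my_sum_pow η hη N) (by positivity)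
    _ ≤ ((2:ℝ)^(m+1) * (1 + 1/((m:ℝ)+1-γ))) * R ^ ((m:ℝ)+1-γ) := by
        rw [← hη1]
        have h6 : ((N:ℝ)+1)^(η+1) ≤ R^(η+1) :=
          Real.rpow_le_rpow (by positivity) hNle (by linarith)
        have h7 : (0:ℝ) ≤ 1 + 1/(η+1) := by
          have : (0:ℝ) < 1/(η+1) := by
            apply one_div_pos.mpr
            linarith
          linarith
        have h8 : (0:ℝ) ≤ (2:ℝ)^(m+1) := by positivity
        rw [mul_assoc]
        apply mul_le_mul_of_nonneg_left _ h8
        exact mul_le_mul_of_nonneg_left h6 h7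

lemma my_alg (m : ℕ) (α β γ K : ℝ) (hK : 0 ≤ K) (hαd : α ≤ (m:ℝ)+1)
    (hγ : γ = α + β - ((m:ℝ)+1)) (u v : ℝ) (hu : 0 < u) (huv : u ≤ v) :
    (u/2)^(-α) * (v/2)^(-β) * (K * (u/2)^((m:ℝ)+1-γ)) ≤ (K * ((2:ℝ)^γ * 2^γ)) * (u^(-γ) * v^(-γ)) := by
  have hv : 0 < v := lt_of_lt_of_le hu huv
  have hu2 : (0:ℝ) < u/2 := by linarith
  have hv2 : (0:ℝ) < v/2 := by linarith
  have e1 : (u/2)^(-α) * (u/2)^((m:ℝ)+1-γ) = (u/2)^(-γ) * (u/2)^((m:ℝ)+1-α) := by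
    rw [← Real.rpow_add hu2, ← Real.rpow_add hu2]
    congr 1
    ring
  have e2 : (u/2)^((m:ℝ)+1-α) ≤ (v/2)^((m:ℝ)+1-α) :=
    Real.rpow_le_rpow hu2.le (by linarith) (by linarith)
  have e3 : (v/2)^(-β) * (v/2)^((m:ℝ)+1-α) = (v/2)^(-γ) := by
    rw [← Real.rpow_add hv2]
    congr 1
    rw [hγ]; ring
  have e4 : (u/2)^(-γ) = 2^γ * u^(-γ) := by
    rw [Real.div_rpow hu.le (by norm_num), Real.rpow_neg (by norm_num : (0:ℝ) ≤ 2), div_eq_mul_inv,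
      inv_inv, mul_comm]
  have e5 : (v/2)^(-γ) = 2^γ * v^(-γ) := by
    rw [Real.div_rpow hv.le (by norm_num), Real.rpow_neg (by norm_num : (0:ℝ) ≤ 2), div_eq_mul_inv,
      inv_inv, mul_comm]
  calc (u/2)^(-α) * (v/2)^(-β) * (K * (u/2)^((m:ℝ)+1-γ))
      = K * (((u/2)^(-α) * (u/2)^((m:ℝ)+1-γ)) * (v/2)^(-β)) := by ring
    _ = K * (((u/2)^(-γ) * (u/2)^((m:ℝ)+1-α)) * (v/2)^(-β)) := by rw [e1]
    _ ≤ K * (((u/2)^(-γ) * (v/2)^((m:ℝ)+1-α)) * (v/2)^(-β)) := by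
        apply mul_le_mul_of_nonneg_left _ hK
        apply mul_le_mul_of_nonneg_right _ (Real.rpow_nonneg hv2.le _)
        exact mul_le_mul_of_nonneg_left e2 (Real.rpow_nonneg hu2.le _)
    _ = K * ((u/2)^(-γ) * (v/2)^(-γ)) := by rw [← e3]; ring
    _ = (K * ((2:ℝ)^γ * 2^γ)) * (u^(-γ) * v^(-γ)) := by rw [e4, e5]; ring

theorem statement19 {d : ℕ} (α β : ℝ) (hα : α ∈ Set.Ico (0 : ℝ) d) (hβ : β ∈ Set.Ico (0 : ℝ) d)
    (hγ : 0 < α + β - d) (hγd : α + β - d < d) :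
    ∃ C : ℝ, 0 < C ∧ ∀ x y z : Zd d, br z x ≤ br z y →
      (∑' a : {a : Zd d // br a z ≤ br z x / 2},
          br a.1 x ^ (-α) * br a.1 y ^ (-β) * br a.1 z ^ (-(α + β - d)))
        ≤ C * (br z x ^ (-(α + β - d)) * br z y ^ (-(α + β - d))) ∧
      C * (br z x ^ (-(α + β - d)) * br z y ^ (-(α + β - d)))
        ≤ C * (min (br x y * br y z) (min (br y z * br z x) (br z x * br x y)))
              ^ (-(α + β - d)) := by
  classical
  obtain ⟨hα0, hαd⟩ := hα
  obtain ⟨hβ0, hβd⟩ := hβ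
  obtain ⟨m, rfl⟩ : ∃ m, d = m + 1 := by
    refine ⟨d - 1, ?_⟩
    rcases Nat.eq_zero_or_pos d with h | h
    · subst h; norm_num at hαd; linarith
    · omega
  set γ : ℝ := α + β - ((m+1 : ℕ) : ℝ) with hγdef
  have hmd : ((m+1 : ℕ) : ℝ) = (m:ℝ)+1 := by push_cast; ring
  have hγ0 : 0 < γ := hγ
  have hγd' : γ < (m:ℝ)+1 := by rw [← hmd]; exact hγd
  have hγeq : γ = α + β - ((m:ℝ)+1) := by rw [hγdef, hmd]
  have hαd' : α ≤ (m:ℝ)+1 := by rw [← hmd]; exact hαd.le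
  set K : ℝ := (2:ℝ)^(m+1) * (1 + 1/((m:ℝ)+1-γ)) with hKdef
  have hKpos : 0 < K := by
    have h1 : 0 < (m:ℝ)+1-γ := by linarith
    have h2 : 0 < 1/((m:ℝ)+1-γ) := one_div_pos.mpr h1
    have h3 : (0:ℝ) < (2:ℝ)^(m+1) := by positivity
    rw [hKdef]
    nlinarith
  set C : ℝ := K * ((2:ℝ)^γ * 2^γ) with hCdef
  have hCpos : 0 < C := by
    have h1 : (0:ℝ) < (2:ℝ)^γ := Real.rpow_pos_of_pos (by norm_num) _
    rw [hCdef]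
    positivity
  refine ⟨C, hCpos, ?_⟩
  intro x y z hzxy
  have hzx := my_br_pos z x
  have hzy := my_br_pos z y
  constructor
  · -- the sum bound
    set R : ℝ := br z x / 2 with hRdef
    have hRpos : 0 < R := by rw [hRdef]; linarith
    set M : ℤ := (⌊R⌋₊ : ℤ) with hMdef
    set B : Finset (Zd (m+1)) := Fintype.piFinset (fun i : Fin (m+1) => Finset.Icc (z i - M) (z i + M)) with hBdef
    set A : Finset (Zd (m+1)) := B.filter (fun a => br a z ≤ R) with hAdef
    have hmemB : ∀ a : Zd (m+1), br a z ≤ R → a ∈ B := by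
      intro a haz
      rw [hBdef, Fintype.mem_piFinset]
      intro i
      rw [Finset.mem_Icc]
      have h1 : (a i - z i).natAbs ≤ sdist z a :=
        Finset.single_le_sum (f := fun j => (a j - z j).natAbs)
          (fun j _ => Nat.zero_le _) (Finset.mem_univ _)
      have h2 : ((sdist z a : ℕ) : ℝ) ≤ R := by
        have := my_br_eq_sdist z a
        linarith
      have h3 : ((a i - z i).natAbs : ℝ) ≤ R := le_trans (by exact_mod_cast h1) h2
      have h4 : (a i - z i).natAbs ≤ ⌊R⌋₊ := Nat.le_floor h3
      rw [hMdef]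
      omega
    have hAmem : ∀ a ∈ A, br a z ≤ R := fun a ha => (Finset.mem_filter.mp ha).2
    have htsum : (∑' a : {a : Zd (m+1) // br a z ≤ R},
          br a.1 x ^ (-α) * br a.1 y ^ (-β) * br a.1 z ^ (-γ))
        = ∑ a ∈ A, br a x ^ (-α) * br a y ^ (-β) * br a z ^ (-γ) := by
      have h0 : ∀ b ∉ A, Set.indicator {a : Zd (m+1) | br a z ≤ R}
          (fun a => br a x ^ (-α) * br a y ^ (-β) * br a z ^ (-γ)) b = 0 := by
        intro b hb
        apply Set.indicator_of_notMem
        intro hbs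
        exact hb (Finset.mem_filter.mpr ⟨hmemB b hbs, hbs⟩)
      calc (∑' a : {a : Zd (m+1) // br a z ≤ R},
            br a.1 x ^ (-α) * br a.1 y ^ (-β) * br a.1 z ^ (-γ))
          = ∑' a : Zd (m+1), Set.indicator {a : Zd (m+1) | br a z ≤ R}
              (fun a => br a x ^ (-α) * br a y ^ (-β) * br a z ^ (-γ)) a :=
            _root_.tsum_subtype {a : Zd (m+1) | br a z ≤ R}
              (fun a => br a x ^ (-α) * br a y ^ (-β) * br a z ^ (-γ))
        _ = ∑ a ∈ A, Set.indicator {a : Zd (m+1) | br a z ≤ R}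
              (fun a => br a x ^ (-α) * br a y ^ (-β) * br a z ^ (-γ)) a := tsum_eq_sum h0
        _ = ∑ a ∈ A, br a x ^ (-α) * br a y ^ (-β) * br a z ^ (-γ) :=
            Finset.sum_congr rfl fun a ha => Set.indicator_of_mem
              (show a ∈ {a : Zd (m+1) | br a z ≤ R} from hAmem a ha) _
    rw [htsum]
    rcases lt_or_ge (br z x) 2 with hsmall | hbig
    · have hAempty : A = ∅ := by
        apply Finset.eq_empty_of_forall_notMem
        intro a ha
        have h1 := hAmem a ha
        have h2 := my_one_le_br a z
        rw [hRdef] at h1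
        linarith
      rw [hAempty, Finset.sum_empty]
      have := mul_pos hCpos (mul_pos (Real.rpow_pos_of_pos hzx (-γ)) (Real.rpow_pos_of_pos hzy (-γ)))
      linarith
    · have hR1 : 1 ≤ R := by rw [hRdef]; linarith
      have hterm : ∀ a ∈ A, br a x ^ (-α) * br a y ^ (-β) * br a z ^ (-γ)
          ≤ (br z x / 2)^(-α) * (br z y / 2)^(-β) * br a z ^ (-γ) := by
        intro a ha
        have haz := hAmem a ha
        have htri1 := my_br_tri z a x
        have htri2 := my_br_tri z a y
        have hsymm : br z a = br a z := my_br_symm z a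
        have h1 : br z x / 2 ≤ br a x := by rw [hRdef] at haz; linarith
        have h2 : br z y / 2 ≤ br a y := by rw [hRdef] at haz; linarith
        have t1 : br a x ^ (-α) ≤ (br z x / 2)^(-α) :=
          Real.rpow_le_rpow_of_nonpos (by linarith) h1 (neg_nonpos.mpr hα0)
        have t2 : br a y ^ (-β) ≤ (br z y / 2)^(-β) :=
          Real.rpow_le_rpow_of_nonpos (by linarith) h2 (neg_nonpos.mpr hβ0)
        apply mul_le_mul_of_nonneg_right _ (Real.rpow_nonneg (my_br_pos a z).le _)
        exact mul_le_mul t1 t2 (Real.rpow_nonneg (my_br_pos a y).le _)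
          (Real.rpow_nonneg (by positivity) _)
      calc ∑ a ∈ A, br a x ^ (-α) * br a y ^ (-β) * br a z ^ (-γ)
          ≤ ∑ a ∈ A, (br z x / 2)^(-α) * (br z y / 2)^(-β) * br a z ^ (-γ) :=
            Finset.sum_le_sum hterm
        _ = (br z x / 2)^(-α) * (br z y / 2)^(-β) * ∑ a ∈ A, br a z ^ (-γ) := by
            rw [Finset.mul_sum]
        _ ≤ (br z x / 2)^(-α) * (br z y / 2)^(-β) * (K * R ^ ((m:ℝ)+1-γ)) := by
            apply mul_le_mul_of_nonneg_left _ (by positivity)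
            rw [hKdef]
            exact my_ball_sum γ hγ0 hγd' z R hR1 A hAmem
        _ ≤ C * (br z x ^ (-γ) * br z y ^ (-γ)) := by
            rw [hCdef, hRdef]
            exact my_alg m α β γ K hKpos.le hαd' hγeq (br z x) (br z y) hzx hzxy
  · -- the min bound
    have hxy := my_br_pos x y
    have hyz := my_br_pos y z
    have hmin : min (br x y * br y z) (min (br y z * br z x) (br z x * br x y))
        ≤ br z x * br z y := by
      refine le_trans (min_le_right _ _) (le_trans (min_le_left _ _) ?_)
      rw [my_br_symm y z]
      rw [mul_comm]
    have hminpos : 0 < min (br x y * br y z) (min (br y z * br z x) (br z x * br x y)) :=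
      lt_min (mul_pos hxy hyz) (lt_min (mul_pos hyz hzx) (mul_pos hzx hxy))
    have h := Real.rpow_le_rpow_of_nonpos hminpos hmin (neg_nonpos.mpr hγ0.le)
    have hmul : (br z x * br z y) ^ (-γ) = br z x ^ (-γ) * br z y ^ (-γ) :=
      Real.mul_rpow hzx.le hzy.le
    rw [← hmul]
    exact mul_le_mul_of_nonneg_left h hCpos.le
end
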